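/- arXiv:1809.10945 — 2 statements merged into one kernel-verified Lean document; each statement's English description precedes it below -/
import Mathlib

section
/- Let K be a finite abstract simplicial complex. Then every maximal simplex of the nerve N(K) is of the form M_K(v) for some vertex v of K, where M_K(v) is the set of all maximal simplices of K containing v; and conversely, for every vertex v of K the set M_K(v) is a simplex of N(K). -/
/-- `K` is an abstract simplicial complex: every member is nonempty and every
nonempty subset of a member belongs to `K`. -/
def IsComplex {V : Type*} (K : Set (Finset V)) : Prop :=
  (∀ σ ∈ K, σ.Nonempty) ∧ ∀ σ ∈ K, ∀ τ : Finset V, τ ⊆ σ → τ.Nonempty → τ ∈ K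

/-- `v` is a vertex of `K`. -/
def IsVertex {V : Type*} (K : Set (Finset V)) (v : V) : Prop := {v} ∈ K

/-- `σ` is a maximal simplex of `K`. -/
def IsMaximalSimplex {V : Type*} (K : Set (Finset V)) (σ : Finset V) : Prop :=
  σ ∈ K ∧ ∀ τ ∈ K, σ ⊆ τ → σ = τ

/-- The nerve of `K`: all nonempty finite sets of maximal simplices of `K`
with nonempty common intersection. -/
def nerve {V : Type*} (K : Set (Finset V)) : Set (Finset (Finset V)) :=
  {S | S.Nonempty ∧ (∀ σ ∈ S, IsMaximalSimplex K σ) ∧ ∃ x : V, ∀ σ ∈ S, x ∈ σ}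

/-- `M_K(v)`: the set of maximal simplices of `K` containing the vertex `v`. -/
def MK {V : Type*} (K : Set (Finset V)) (v : V) : Set (Finset V) :=
  {σ | IsMaximalSimplex K σ ∧ v ∈ σ}

/-- Every simplex of a finite complex is contained in a maximal simplex. -/
lemma exists_maximal_superset {V : Type*} (K : Set (Finset V)) (hfin : K.Finite)
    {σ : Finset V} (hσ : σ ∈ K) : ∃ τ, IsMaximalSimplex K τ ∧ σ ⊆ τ := by
  have hs : ({τ ∈ K | σ ⊆ τ} : Set (Finset V)).Finite := hfin.subset (fun τ hτ => hτ.1)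
  obtain ⟨τ, hτ, hmax⟩ := hs.exists_maximalFor id _ ⟨σ, hσ, subset_rfl⟩
  exact ⟨τ, ⟨hτ.1, fun ρ hρ hsub =>
    Finset.Subset.antisymm hsub (hmax ⟨hρ, hτ.2.trans hsub⟩ hsub)⟩, hτ.2⟩

/-- For a finite complex `K`, the maximal simplices of the nerve `N(K)` are exactly the
sets `M_K(v)` over the vertices `v` of `K`: every maximal simplex of `N(K)` is of the
form `M_K(v)` for some vertex `v`, and conversely each `M_K(v)` is a simplex of `N(K)`. -/
theorem maximal_of_nerve {V : Type*} (K : Set (Finset V))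
    (hK : IsComplex K) (hfin : K.Finite) :
    (∀ S : Finset (Finset V), IsMaximalSimplex (nerve K) S →
      ∃ v : V, IsVertex K v ∧ (S : Set (Finset V)) = MK K v) ∧
    (∀ v : V, IsVertex K v →
      ∃ S : Finset (Finset V), (S : Set (Finset V)) = MK K v ∧ S ∈ nerve K) := by
  have hMKfin : ∀ v : V, (MK K v).Finite := fun v => hfin.subset (fun σ hσ => hσ.1.1)
  have hvertex : ∀ v : V, IsVertex K v →
      ((hMKfin v).toFinset : Set (Finset V)) = MK K v ∧ (hMKfin v).toFinset ∈ nerve K := by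
    intro v hv
    obtain ⟨τ, hτmax, hτv⟩ := exists_maximal_superset K hfin hv
    have hτmem : τ ∈ (hMKfin v).toFinset := by
      rw [Set.Finite.mem_toFinset]; exact ⟨hτmax, hτv (Finset.mem_singleton_self v)⟩
    refine ⟨(hMKfin v).coe_toFinset, ⟨⟨τ, hτmem⟩, ?_, ⟨v, ?_⟩⟩⟩
    · intro σ hσ; rw [Set.Finite.mem_toFinset] at hσ; exact hσ.1
    · intro σ hσ; rw [Set.Finite.mem_toFinset] at hσ; exact hσ.2
  constructor
  · rintro S ⟨⟨hSne, hSmax, x, hx⟩, hmax⟩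
    obtain ⟨σ₀, hσ₀⟩ := hSne
    have hxv : IsVertex K x :=
      hK.2 σ₀ (hSmax σ₀ hσ₀).1 {x} (Finset.singleton_subset_iff.mpr (hx σ₀ hσ₀))
        ⟨x, Finset.mem_singleton_self x⟩
    refine ⟨x, hxv, ?_⟩
    have hsub : S ⊆ (hMKfin x).toFinset := by
      intro σ hσ; rw [Set.Finite.mem_toFinset]; exact ⟨hSmax σ hσ, hx σ hσ⟩
    obtain ⟨hcoe, hnerve⟩ := hvertex x hxv
    rw [← hcoe, hmax _ hnerve hsub]
  · intro v hv
    exact ⟨(hMKfin v).toFinset, hvertex v hv⟩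
end

section
/- Let K be a finite abstract simplicial complex and let v be a vertex of K. Then v is dominated by some vertex of K if and only if the intersection of all maximal simplices of K containing v contains a vertex other than v, i.e., (⋂_{σ ∈ M_K(v)} σ) \ {v} ≠ ∅. -/
/-- The link of the vertex `v` in `K`. -/
def link {V : Type*} [DecidableEq V] (K : Set (Finset V)) (v : V) : Set (Finset V) :=
  {τ | τ ∈ K ∧ v ∉ τ ∧ τ ∪ {v} ∈ K}

/-- `v` is dominated by the vertex `v' ≠ v`: the link of `v` is a cone with apex `v'`. -/
def Dominated {V : Type*} [DecidableEq V] (K : Set (Finset V)) (v v' : V) : Prop :=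
  v' ≠ v ∧ ({v'} : Finset V) ∈ link K v ∧ ∀ τ ∈ link K v, τ ∪ {v'} ∈ link K v

/-- Every simplex of a finite complex is contained in a maximal simplex. -/
lemma exists_maximal_supset {V : Type*} {K : Set (Finset V)} (hfin : K.Finite)
    {σ : Finset V} (hσ : σ ∈ K) : ∃ τ, IsMaximalSimplex K τ ∧ σ ⊆ τ := by
  have hs : ({τ ∈ K | σ ⊆ τ} : Set (Finset V)).Finite := hfin.subset (fun τ hτ => hτ.1)
  obtain ⟨τ, hτ, hmax⟩ := hs.exists_maximalFor Finset.card _ ⟨σ, hσ, subset_rfl⟩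
  refine ⟨τ, ⟨hτ.1, fun ρ hρ hsub => ?_⟩, hτ.2⟩
  have : ρ ∈ {τ ∈ K | σ ⊆ τ} := ⟨hρ, hτ.2.trans hsub⟩
  exact Finset.eq_of_subset_of_card_le hsub
    (hmax this (Finset.card_le_card hsub))

/-- A vertex `v` of a finite complex `K` is dominated by some vertex iff the
intersection of all maximal simplices containing `v` contains a vertex other
than `v`. -/
theorem dominated_iff_inter_nontrivial {V : Type*} [DecidableEq V]
    (K : Set (Finset V)) (hK : IsComplex K) (hfin : K.Finite)
    (v : V) (hv : IsVertex K v) :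
    (∃ v' : V, Dominated K v v') ↔
      ((⋂ σ ∈ MK K v, (σ : Set V)) \ {v}).Nonempty := by
  constructor
  · rintro ⟨v', hne, hlk, hcone⟩
    refine ⟨v', ?_, hne⟩
    rw [Set.mem_iInter₂]
    rintro σ ⟨hmaxσ, hvσ⟩
    by_cases h : (σ \ {v}).Nonempty
    · have hτK : σ \ {v} ∈ K := hK.2 σ hmaxσ.1 _ (Finset.sdiff_subset) h
      have hτlk : σ \ {v} ∈ link K v := by
        refine ⟨hτK, by simp, ?_⟩
        rw [Finset.sdiff_union_of_subset (Finset.singleton_subset_iff.mpr hvσ)]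
        exact hmaxσ.1
      obtain ⟨h1, h2, h3⟩ := hcone _ hτlk
      have hsub : σ ⊆ σ \ {v} ∪ {v'} ∪ {v} := by
        intro x hx
        simp only [Finset.mem_union, Finset.mem_sdiff, Finset.mem_singleton]
        by_cases hxv : x = v
        · right; exact hxv
        · left; left; exact ⟨hx, hxv⟩
      have := hmaxσ.2 _ h3 hsub
      have : v' ∈ σ := by
        rw [this]; simp
      exact_mod_cast this
    · have hσv : σ = {v} := by
        rw [Finset.not_nonempty_iff_eq_empty, Finset.sdiff_eq_empty_iff_subset] at h
        exact Finset.Subset.antisymm h (Finset.singleton_subset_iff.mpr hvσ)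
      exfalso
      obtain ⟨h1, h2, h3⟩ := hlk
      have := hmaxσ.2 _ h3 (by rw [hσv]; intro x hx; simp_all)
      apply hne
      have : v' ∈ σ := by rw [this]; simp
      rw [hσv] at this; simpa using this
  · rintro ⟨v', hv', hne⟩
    rw [Set.mem_iInter₂] at hv'
    simp only [Set.mem_singleton_iff] at hne
    have key : ∀ ρ ∈ K, v ∈ ρ → ρ ∪ {v'} ∈ K := by
      intro ρ hρ hvρ
      obtain ⟨σ, hmax, hsub⟩ := exists_maximal_supset hfin hρ
      have hv'σ : v' ∈ σ := by exact_mod_cast hv' σ ⟨hmax, hsub hvρ⟩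
      refine hK.2 σ hmax.1 _ ?_ ⟨v', by simp⟩
      intro x hx
      simp only [Finset.mem_union, Finset.mem_singleton] at hx
      rcases hx with h | h
      · exact hsub h
      · rw [h]; exact hv'σ
    refine ⟨v', hne, ⟨?_, ?_⟩, ?_⟩
    · have := key {v} hv (by simp)
      exact hK.2 _ this {v'} (by simp) ⟨v', by simp⟩
    · refine ⟨by simpa using Ne.symm hne, ?_⟩
      have := key {v} hv (by simp)
      rwa [Finset.union_comm] at this
    · rintro τ ⟨hτ, hvτ, hτv⟩
      have h1 : τ ∪ {v} ∪ {v'} ∈ K := key _ hτv (by simp)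
      refine ⟨?_, ?_, ?_⟩
      · refine hK.2 _ h1 (τ ∪ {v'}) ?_ ⟨v', by simp⟩
        intro x hx; simp at hx ⊢; tauto
      · simp only [Finset.mem_union, Finset.mem_singleton]
        push_neg
        exact ⟨hvτ, Ne.symm hne⟩
      · have : τ ∪ {v'} ∪ {v} = τ ∪ {v} ∪ {v'} := by
          ext x; simp; tauto
        rw [this]; exact h1
end
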